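/- arXiv:1507.02908 — 4 statements merged into one kernel-verified Lean document; each statement's English description precedes it below -/
import Mathlib

section
/- For all real numbers b > 0, s with 0 < s and t ≥ b, the function g(t, s) := (t + s)·ln(1 + s/t)/s is nonincreasing in t on [b, ∞) and nondecreasing in s; consequently, if s ≤ δ·b for δ > 0, then g(t, s) ≤ (1 + δ)·ln(1 + δ)/δ. -/
noncomputable def auxF (x : ℝ) : ℝ := (1 + x) * Real.log (1 + x) / x

lemma hasDerivAt_auxF {x : ℝ} (hx : 0 < x) :
    HasDerivAt auxF ((x - Real.log (1 + x)) / x ^ 2) x := by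
  have h1x : (0:ℝ) < 1 + x := by linarith
  have hlog : HasDerivAt (fun y : ℝ => Real.log (1 + y)) (1 / (1 + x)) x := by
    have := (Real.hasDerivAt_log (ne_of_gt h1x)).comp x
      ((hasDerivAt_id x).const_add 1)
    simpa [Function.comp_def] using this
  have hu : HasDerivAt (fun y : ℝ => (1 + y) * Real.log (1 + y))
      (1 * Real.log (1 + x) + (1 + x) * (1 / (1 + x))) x :=
    ((hasDerivAt_id x).const_add 1).mul hlog
  have hf := hu.div (hasDerivAt_id x) (ne_of_gt hx)
  convert hf using 1
  · rfl
  · rfl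
  · rfl
  simp only [id]
  field_simp
  ring

lemma auxF_mono : MonotoneOn auxF (Set.Ioi 0) := by
  have hint : interior (Set.Ioi (0:ℝ)) = Set.Ioi 0 := interior_Ioi
  apply monotoneOn_of_deriv_nonneg (convex_Ioi 0)
  · intro x hx
    exact (hasDerivAt_auxF hx).continuousAt.continuousWithinAt
  · rw [hint]; intro x hx; exact (hasDerivAt_auxF hx).differentiableAt.differentiableWithinAt
  · rw [hint]; intro x hx
    rw [(hasDerivAt_auxF hx).deriv]
    have hx : (0:ℝ) < x := hx
    have hlog : Real.log (1 + x) ≤ x := by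
      have := Real.log_le_sub_one_of_pos (by linarith : (0:ℝ) < 1 + x)
      linarith
    exact div_nonneg (by linarith) (sq_nonneg x)

lemma g_eq_auxF (t s : ℝ) (ht : 0 < t) (hs : 0 < s) :
    (t + s) * Real.log (1 + s / t) / s = auxF (s / t) := by
  unfold auxF
  set L := Real.log (1 + s / t) with hL
  field_simp

theorem stmt_3 (b δ : ℝ) (hb : 0 < b) (hδ : 0 < δ) :
    (∀ s : ℝ, 0 < s → ∀ t₁ t₂ : ℝ, b ≤ t₁ → t₁ ≤ t₂ →
      (t₂ + s) * Real.log (1 + s / t₂) / s ≤ (t₁ + s) * Real.log (1 + s / t₁) / s) ∧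
    (∀ t : ℝ, b ≤ t → ∀ s₁ s₂ : ℝ, 0 < s₁ → s₁ ≤ s₂ →
      (t + s₁) * Real.log (1 + s₁ / t) / s₁ ≤ (t + s₂) * Real.log (1 + s₂ / t) / s₂) ∧
    (∀ t s : ℝ, b ≤ t → 0 < s → s ≤ δ * b →
      (t + s) * Real.log (1 + s / t) / s ≤ (1 + δ) * Real.log (1 + δ) / δ) := by
  refine ⟨?_, ?_, ?_⟩
  · intro s hs t₁ t₂ ht₁ h12
    have ht₁p : 0 < t₁ := lt_of_lt_of_le hb ht₁
    have ht₂p : 0 < t₂ := lt_of_lt_of_le ht₁p h12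
    rw [g_eq_auxF t₁ s ht₁p hs, g_eq_auxF t₂ s ht₂p hs]
    exact auxF_mono (div_pos hs ht₂p) (div_pos hs ht₁p) (by gcongr)
  · intro t ht s₁ s₂ hs₁ h12
    have htp : 0 < t := lt_of_lt_of_le hb ht
    have hs₂ : 0 < s₂ := lt_of_lt_of_le hs₁ h12
    rw [g_eq_auxF t s₁ htp hs₁, g_eq_auxF t s₂ htp hs₂]
    exact auxF_mono (div_pos hs₁ htp) (div_pos hs₂ htp) (by gcongr)
  · intro t s ht hs hsδ
    have htp : 0 < t := lt_of_lt_of_le hb ht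
    rw [g_eq_auxF t s htp hs]
    have hx : s / t ≤ δ := by
      rw [div_le_iff₀ htp]
      nlinarith
    have : auxF (s / t) ≤ auxF δ :=
      auxF_mono (div_pos hs htp) hδ hx
    simpa [auxF] using this
end

section
/- Let b > 0, s > 0, t ≥ 0 with s ≤ δ·b for some δ > 0, and suppose the utility is u := min(s, b·s/(t + s)) and the potential contribution is φ := s if t + s ≤ b, φ := b − t + b·ln((t+s)/b) if t ≤ b < t + s, and φ := b·ln((t+s)/t) if t ≥ b. Then u ≤ φ. -/
lemma one_sub_inv_le_log {x : ℝ} (hx : 0 < x) : 1 - 1 / x ≤ Real.log x := by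
  have h := Real.log_le_sub_one_of_pos (show (0:ℝ) < 1 / x by positivity)
  rw [Real.log_div one_ne_zero (ne_of_gt hx), Real.log_one] at h
  linarith

theorem stmt_8 (b s t δ : ℝ) (hb : 0 < b) (hs : 0 < s) (ht : 0 ≤ t)
    (hδ : 0 < δ) (hsb : s ≤ δ * b) :
    min s (b * s / (t + s)) ≤
      if t + s ≤ b then s
      else if t ≤ b then b - t + b * Real.log ((t + s) / b)
      else b * Real.log ((t + s) / t) := by
  have hts : 0 < t + s := by linarith
  split_ifs with h1 h2
  · exact min_le_left _ _
  · -- t ≤ b < t + s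
    push_neg at h1
    refine (min_le_right _ _).trans ?_
    have hlog : 1 - b / (t + s) ≤ Real.log ((t + s) / b) := by
      have := one_sub_inv_le_log (show (0:ℝ) < (t + s) / b by positivity)
      rwa [one_div_div] at this
    have key : b * s / (t + s) ≤ b - t + b * (1 - b / (t + s)) := by
      rw [← sub_nonneg]
      have heq : b - t + b * (1 - b / (t + s)) - b * s / (t + s) =
          (b - t) * (t + s - b) / (t + s) := by field_simp; ring
      rw [heq]
      exact div_nonneg (by nlinarith) hts.le
    nlinarith
  · -- b < t
    push_neg at h1 h2
    have ht' : 0 < t := lt_trans hb h2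
    refine (min_le_right _ _).trans ?_
    have hlog : 1 - t / (t + s) ≤ Real.log ((t + s) / t) := by
      have := one_sub_inv_le_log (show (0:ℝ) < (t + s) / t by positivity)
      rwa [one_div_div] at this
    have : 1 - t / (t + s) = s / (t + s) := by field_simp; ring
    rw [this] at hlog
    calc b * s / (t + s) = b * (s / (t + s)) := by ring
      _ ≤ b * Real.log ((t + s) / t) := by nlinarith
end

section
/- Let b > 0, δ ∈ (0, 1], s = δ·b, and t ∈ [0, b) with t + s > b. Define R(t) := (t + δb)·(b − t + b·ln((t + δb)/b))/(δb²). Then the unique critical point of R on (b(1−δ), b) satisfies b·ln((t + δb)/b) + 2b − 2t − δb = 0, i.e., t = b·(w − δ) where w > 1 is the unique solution of ln(w) = 2w − δ − 2, and R attains its maximum value w·(ln(w) − w + δ + 1)/δ there. -/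
private lemma key_ineq (w x δ : ℝ) (hw : 1 < w) (hx : 0 < x)
    (hlw : Real.log w = 2 * w - δ - 2) :
    x * (Real.log x - x + δ + 1) ≤ w * (Real.log w - w + δ + 1) := by
  have hw0 : (0:ℝ) < w := by linarith
  have hlog : Real.log (x / w) ≤ x / w - 1 :=
    Real.log_le_sub_one_of_pos (div_pos hx hw0)
  rw [Real.log_div (ne_of_gt hx) (ne_of_gt hw0)] at hlog
  have hlog' : w * (Real.log x - Real.log w) ≤ x - w := by
    have h := mul_le_mul_of_nonneg_left hlog hw0.le
    have hw' : w * (x / w - 1) = x - w := by field_simp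
    rw [hw'] at h; exact h
  have h2 : x * (w * (Real.log x - Real.log w)) ≤ x * (x - w) :=
    mul_le_mul_of_nonneg_left hlog' hx.le
  rw [hlw] at h2
  have hmul : w * (x * (Real.log x - x + δ + 1)) ≤ w * (w * (Real.log w - w + δ + 1)) := by
    rw [hlw]
    nlinarith [mul_nonneg (sub_nonneg.2 hw.le) (sq_nonneg (w - x)), h2]
  exact le_of_mul_le_mul_left hmul hw0

theorem stmt_16 (b δ : ℝ) (hb : 0 < b) (hδ0 : 0 < δ) (hδ1 : δ ≤ 1) :
    let R : ℝ → ℝ := fun t =>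
      (t + δ * b) * (b - t + b * Real.log ((t + δ * b) / b)) / (δ * b ^ 2)
    ∃ w : ℝ, 1 < w ∧ Real.log w = 2 * w - δ - 2 ∧
      (∀ w' : ℝ, 1 < w' → Real.log w' = 2 * w' - δ - 2 → w' = w) ∧
      b * Real.log ((b * (w - δ) + δ * b) / b) + 2 * b - 2 * (b * (w - δ)) - δ * b = 0 ∧
      (∀ t ∈ Set.Ioo (b * (1 - δ)) b, R t ≤ w * (Real.log w - w + δ + 1) / δ) ∧
      R (b * (w - δ)) = w * (Real.log w - w + δ + 1) / δ := by
  intro R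
  -- existence of w via IVT
  set f : ℝ → ℝ := fun w => 2 * w - δ - 2 - Real.log w with hf
  have hcont : ContinuousOn f (Set.Icc 1 (1 + δ)) := by
    apply ContinuousOn.sub (Continuous.continuousOn (by continuity))
    apply Real.continuousOn_log.mono
    intro x hx
    simp only [Set.mem_compl_iff, Set.mem_singleton_iff]
    have := hx.1
    intro h; rw [h] at this; linarith
  have hf1 : f 1 = -δ := by simp [hf]
  have hf2 : 0 ≤ f (1 + δ) := by
    have h := Real.log_le_sub_one_of_pos (show (0:ℝ) < 1 + δ by linarith)
    simp only [hf]
    linarith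
  have hmem : (0:ℝ) ∈ Set.Icc (f 1) (f (1 + δ)) := by
    constructor <;> [linarith [hf1 ▸ (le_refl (f 1))]; exact hf2]
  have hivt := intermediate_value_Icc (by linarith : (1:ℝ) ≤ 1 + δ) hcont
  obtain ⟨w, hwmem, hw0⟩ := hivt (by rw [hf1]; exact ⟨by linarith, hf2⟩)
  have hweq : Real.log w = 2 * w - δ - 2 := by
    simp only [hf] at hw0; linarith
  have hw1 : 1 < w := by
    rcases lt_or_eq_of_le hwmem.1 with h | h
    · exact h
    · exfalso; rw [← h] at hweq; simp at hweq; linarith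
  have hwpos : 0 < w := by linarith
  -- uniqueness
  have huniq : ∀ w' : ℝ, 1 < w' → Real.log w' = 2 * w' - δ - 2 → w' = w := by
    intro w' hw1' hweq'
    have hw0' : (0:ℝ) < w' := by linarith
    have h1 : Real.log (w' / w) ≤ w' / w - 1 :=
      Real.log_le_sub_one_of_pos (div_pos hw0' hwpos)
    have h2 : Real.log (w / w') ≤ w / w' - 1 :=
      Real.log_le_sub_one_of_pos (div_pos hwpos hw0')
    rw [Real.log_div (ne_of_gt hw0') (ne_of_gt hwpos)] at h1
    rw [Real.log_div (ne_of_gt hwpos) (ne_of_gt hw0')] at h2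
    have h1' : w * (Real.log w' - Real.log w) ≤ w' - w := by
      have h := mul_le_mul_of_nonneg_left h1 hwpos.le
      have he : w * (w' / w - 1) = w' - w := by field_simp
      rw [he] at h; exact h
    have h2' : w' * (Real.log w - Real.log w') ≤ w - w' := by
      have h := mul_le_mul_of_nonneg_left h2 hw0'.le
      have he : w' * (w / w' - 1) = w - w' := by field_simp
      rw [he] at h; exact h
    nlinarith [h1', h2']
  refine ⟨w, hw1, hweq, huniq, ?_, ?_, ?_⟩
  · -- critical point equation
    have : (b * (w - δ) + δ * b) / b = w := by field_simp; ring
    rw [this, hweq]; ring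
  · -- maximality
    intro t ht
    obtain ⟨ht1, ht2⟩ := ht
    set x := (t + δ * b) / b with hxdef
    have hx1 : 1 < x := by
      rw [hxdef, lt_div_iff₀ hb]; nlinarith
    have hx0 : 0 < x := by linarith
    have hRt : R t = x * (Real.log x - x + δ + 1) / δ := by
      have hxt : t = x * b - δ * b := by rw [hxdef]; field_simp; ring
      simp only [R, ← hxdef]
      rw [hxt]
      field_simp
      ring
    rw [hRt]
    have := key_ineq w x δ hw1 hx0 hweq
    gcongr
  · -- value at critical point
    have harg : (b * (w - δ) + δ * b) / b = w := by field_simp; ring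
    simp only [R]
    have : b * (w - δ) + δ * b = b * w := by ring
    rw [show (b * (w - δ) + δ * b) / b = w from harg]
    field_simp
    ring
end

section
/- For every δ ∈ (0, 1], the values α_δ^l := (2√(δ²(δ+2)) + δ − 1)/(4δ − 1) (for δ > 1/4) and α_δ^u := w·(ln(w) − w + δ + 1)/δ, where w > 1 is the unique solution of ln(w) = 2w − δ − 2, satisfy α_δ^l ≤ α_δ^u. -/
private lemma pade_log (x : ℝ) (hx : 1 ≤ x) : 2*(x-1)/(x+1) ≤ Real.log x := by
  have hder : ∀ y : ℝ, 0 < y →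
      HasDerivAt (fun t : ℝ => Real.log t - 2*(t-1)/(t+1)) (1/y - 4/(y+1)^2) y := by
    intro y hy
    have h1 : HasDerivAt Real.log (1/y) y := by
      simpa [one_div] using Real.hasDerivAt_log hy.ne'
    have hne : y + 1 ≠ 0 := by linarith
    have ha : HasDerivAt (fun t : ℝ => 2*(t-1)) 2 y := by
      simpa using ((hasDerivAt_id y).sub_const (1:ℝ)).const_mul (2:ℝ)
    have hb : HasDerivAt (fun t : ℝ => t+1) 1 y := (hasDerivAt_id y).add_const 1
    have h2 : HasDerivAt (fun t : ℝ => 2*(t-1)/(t+1)) (4/(y+1)^2) y := by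
      have : HasDerivAt (fun t : ℝ => 2*(t-1)/(t+1))
          ((2 * (y + 1) - 2 * (y - 1) * 1) / (y + 1) ^ 2) y := ha.div hb hne
      convert this using 1
      field_simp
      ring
    exact h1.sub h2
  have mono : MonotoneOn (fun t : ℝ => Real.log t - 2*(t-1)/(t+1)) (Set.Ici 1) := by
    apply monotoneOn_of_deriv_nonneg (convex_Ici 1)
    · intro y hy
      have hy0 : (0:ℝ) < y := lt_of_lt_of_le one_pos hy
      exact (hder y hy0).continuousAt.continuousWithinAt
    · intro y hy
      rw [interior_Ici] at hy
      have hy0 : (0:ℝ) < y := lt_trans one_pos hy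
      exact (hder y hy0).differentiableAt.differentiableWithinAt
    · intro y hy
      rw [interior_Ici] at hy
      have hy1 : (1:ℝ) < y := hy
      have hy0 : (0:ℝ) < y := lt_trans one_pos hy1
      rw [(hder y hy0).deriv]
      have h1 : (0:ℝ) < (y+1)^2 := by positivity
      rw [sub_nonneg, div_le_div_iff₀ h1 hy0]
      nlinarith [sq_nonneg (y-1)]
  have h := mono (Set.mem_Ici.mpr le_rfl) (Set.mem_Ici.mpr hx) hx
  simp only [Real.log_one] at h
  have : (2:ℝ)*(1-1)/(1+1) = 0 := by norm_num
  linarith [h, this.symm ▸ h]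

theorem stmt_17 (δ : ℝ) (hδl : 1 / 4 < δ) (hδu : δ ≤ 1)
    (w : ℝ) (hw : 1 < w) (hweq : Real.log w = 2 * w - δ - 2) :
    (2 * Real.sqrt (δ ^ 2 * (δ + 2)) + δ - 1) / (4 * δ - 1) ≤
      w * (Real.log w - w + δ + 1) / δ := by
  have hδ0 : 0 < δ := by linarith
  have h4δ : 0 < 4 * δ - 1 := by linarith
  have hs : Real.sqrt (δ ^ 2 * (δ + 2)) = δ * Real.sqrt (δ + 2) := by
    rw [Real.sqrt_mul (sq_nonneg δ), Real.sqrt_sq hδ0.le]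
  set A := Real.sqrt (δ + 2) with hAdef
  have hA0 : 0 ≤ A := Real.sqrt_nonneg _
  have hA2 : A ^ 2 = δ + 2 := Real.sq_sqrt (by linarith)
  set B := Real.sqrt (δ ^ 2 + 12 * δ + 4) with hBdef
  have hB0 : 0 ≤ B := Real.sqrt_nonneg _
  have hB2 : B ^ 2 = δ ^ 2 + 12 * δ + 4 := Real.sq_sqrt (by nlinarith)
  -- quadratic bound on w from the Padé inequality
  have hq : 0 ≤ 2 * w ^ 2 - (δ + 2) * w - δ := by
    have hp := pade_log w hw.le
    rw [hweq] at hp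
    have hw1 : 0 < w + 1 := by linarith
    rw [div_le_iff₀ hw1] at hp
    nlinarith
  have hwd : 0 ≤ 4 * w - δ - 2 := by linarith
  have hBle : B ≤ 4 * w - δ - 2 := by
    have h1 : δ ^ 2 + 12 * δ + 4 ≤ (4 * w - δ - 2) ^ 2 := by nlinarith
    calc B ≤ Real.sqrt ((4 * w - δ - 2) ^ 2) := Real.sqrt_le_sqrt h1
    _ = 4 * w - δ - 2 := Real.sqrt_sq hwd
  -- the key algebraic inequality
  have hd2 : δ ^ 2 ≤ δ := by nlinarith
  have hd3 : δ ^ 3 ≤ δ := by nlinarith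
  have hE : 0 ≤ (4*δ-1) * (8 + 72*δ - 14*δ^2 - 8*δ^3) :=
    mul_nonneg h4δ.le (by nlinarith)
  have hC : 0 < 4*δ^2 + 15*δ + 2 := by nlinarith
  have hR0 : 0 ≤ 2 * (4*δ^2 + 15*δ + 2) * (4*δ-1) * B := by positivity
  have hEB : (4*δ-1) * (8 + 72*δ - 14*δ^2 - 8*δ^3)
      ≤ 2 * (4*δ^2 + 15*δ + 2) * (4*δ-1) * B := by
    have hid : ((4*δ-1) * (8 + 72*δ - 14*δ^2 - 8*δ^3))^2
        + ((4*δ-1)*δ)^2 * (1792 + 15872*δ + 7936*δ^2 + 1024*δ^3)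
        = (2 * (4*δ^2 + 15*δ + 2) * (4*δ-1))^2 * (δ^2 + 12*δ + 4) := by ring
    have hpos : 0 ≤ ((4*δ-1)*δ)^2 * (1792 + 15872*δ + 7936*δ^2 + 1024*δ^3) := by
      positivity
    have hsq : ((4*δ-1) * (8 + 72*δ - 14*δ^2 - 8*δ^3))^2
        ≤ (2 * (4*δ^2 + 15*δ + 2) * (4*δ-1) * B)^2 := by
      have : (2 * (4*δ^2 + 15*δ + 2) * (4*δ-1) * B)^2
          = (2 * (4*δ^2 + 15*δ + 2) * (4*δ-1))^2 * B^2 := by ring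
      rw [this, hB2]
      linarith
    calc (4*δ-1) * (8 + 72*δ - 14*δ^2 - 8*δ^3)
        = Real.sqrt (((4*δ-1) * (8 + 72*δ - 14*δ^2 - 8*δ^3))^2) :=
          (Real.sqrt_sq hE).symm
      _ ≤ Real.sqrt ((2 * (4*δ^2 + 15*δ + 2) * (4*δ-1) * B)^2) :=
          Real.sqrt_le_sqrt hsq
      _ = 2 * (4*δ^2 + 15*δ + 2) * (4*δ-1) * B := Real.sqrt_sq hR0
  have key : 16 * δ * A ≤ (4*δ^2 + 15*δ + 2) + (4*δ-1) * B := by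
    have hl0 : 0 ≤ 16 * δ * A := by positivity
    have hr0 : 0 ≤ (4*δ^2 + 15*δ + 2) + (4*δ-1) * B := by positivity
    have hsq : (16 * δ * A)^2 ≤ ((4*δ^2 + 15*δ + 2) + (4*δ-1) * B)^2 := by
      have hL : (16 * δ * A)^2 = 256*δ^2*(δ+2) := by
        calc (16 * δ * A)^2 = 256*δ^2*A^2 := by ring
        _ = 256*δ^2*(δ+2) := by rw [hA2]
      have hRR : ((4*δ^2 + 15*δ + 2) + (4*δ-1) * B)^2
          = (4*δ^2 + 15*δ + 2)^2 + (4*δ-1)^2*(δ^2+12*δ+4)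
            + 2 * (4*δ^2 + 15*δ + 2) * (4*δ-1) * B := by
        have : ((4*δ^2 + 15*δ + 2) + (4*δ-1) * B)^2
            = (4*δ^2 + 15*δ + 2)^2 + (4*δ-1)^2*B^2
              + 2 * (4*δ^2 + 15*δ + 2) * (4*δ-1) * B := by ring
        rw [this, hB2]
      have hid1 : 256*δ^2*(δ+2)
          = (4*δ^2+15*δ+2)^2 + (4*δ-1)^2*(δ^2+12*δ+4)
            + (4*δ-1)*(8+72*δ-14*δ^2-8*δ^3) := by ring
      rw [hL, hRR, hid1]
      linarith
    calc 16 * δ * A = Real.sqrt ((16 * δ * A)^2) := (Real.sqrt_sq hl0).symm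
      _ ≤ Real.sqrt (((4*δ^2 + 15*δ + 2) + (4*δ-1) * B)^2) := Real.sqrt_le_sqrt hsq
      _ = (4*δ^2 + 15*δ + 2) + (4*δ-1) * B := Real.sqrt_sq hr0
  -- chain everything
  rw [hweq, hs]
  have step1 : (2 * (δ * A) + δ - 1) / (4 * δ - 1) ≤ (δ + 6 + B) / 8 := by
    rw [div_le_div_iff₀ h4δ (by norm_num : (0:ℝ) < 8)]
    nlinarith [key]
  have step2 : (δ + 6 + B) / 8 ≤ (w + 1) / 2 := by linarith
  have step3 : (w + 1) / 2 ≤ w * (w - 1) / δ := by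
    rw [div_le_div_iff₀ (by norm_num : (0:ℝ) < 2) hδ0]
    nlinarith [hq]
  calc (2 * (δ * A) + δ - 1) / (4 * δ - 1) ≤ (δ + 6 + B) / 8 := step1
    _ ≤ (w + 1) / 2 := step2
    _ ≤ w * (w - 1) / δ := step3
    _ = w * (2 * w - δ - 2 - w + δ + 1) / δ := by ring_nf
end
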